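/- Let n ≥ 1 and let A be the complex algebra with basis e_0, e_1, …, e_n and multiplication e_i ⋄ e_j = (1/(j+1))·e_{i+j+1} if 0 ≤ i+j ≤ n−1 and e_i ⋄ e_j = 0 otherwise (the algebra IDD(K^0_n, 0, −1)). Then Der(A) is the linear span of the n+1 derivations φ_0, φ_1, …, φ_n defined on the basis by φ_i(e_k) = (i+k+1)·e_{k+i} for 0 ≤ k ≤ n−i and φ_i(e_k) = 0 for k > n−i. -/

import Mathlib

/-- The basis index set `{0, …, n}`. -/
abbrev Ix (n : ℕ) := ↥(Finset.Icc 0 n)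

/-- The vector space with basis `e_0, …, e_n`; the `p`-th coordinate of a vector is its
coefficient at `e_p` (so `e_i = Pi.single i 1`). -/
abbrev V (n : ℕ) := Ix n → ℂ

/-- The multiplication of `IDD(K^0_n, 0, −1)`: `e_i ⋄ e_j = (1/(j+1))·e_{i+j+1}` if `0 ≤ i+j ≤ n−1` and `0` otherwise. -/
noncomputable def mulA (n : ℕ) (x y : V n) : V n := fun p =>
  ∑ i : Ix n, ∑ j : Ix n, x i * y j * (if i.1 + j.1 + 1 = p.1 then ((j.1 : ℂ) + 1)⁻¹ else 0)

/-- `D` is a derivation of `IDD(K^0_n, 0, −1)`. -/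
def IsDer (n : ℕ) (D : V n →ₗ[ℂ] V n) : Prop :=
  ∀ x y, D (mulA n x y) = mulA n (D x) y + mulA n x (D y)

/-- The derivation `φ_i(e_k) = (i+1+k)·e_{k+i}` for `k ≤ n−i`, and `φ_i(e_k) = 0` for
`k > n−i`. -/
noncomputable def phiD (n i : ℕ) : V n →ₗ[ℂ] V n :=
  Matrix.mulVecLin (fun p s : Ix n => if p.1 = s.1 + i then (i : ℂ) + 1 + (s.1 : ℂ) else 0)


lemma mem_Ix {n m : ℕ} (h : m ≤ n) : m ∈ Finset.Icc 0 n := by simp [Finset.mem_Icc, h]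

lemma Ix_le {n : ℕ} (q : Ix n) : q.1 ≤ n := (Finset.mem_Icc.mp q.2).2

lemma sumCollapse {n : ℕ} (m : ℕ) (f : Ix n → ℂ) :
    ∑ q : Ix n, (if m = q.1 then f q else 0)
      = if h : m ≤ n then f ⟨m, mem_Ix h⟩ else 0 := by
  by_cases h : m ≤ n
  · rw [dif_pos h, Finset.sum_eq_single (⟨m, mem_Ix h⟩ : Ix n)]
    · simp
    · intro b _ hb
      rw [if_neg]
      intro e; exact hb (Subtype.ext e.symm)
    · intro habs; exact absurd (Finset.mem_univ _) habs
  · rw [dif_neg h]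
    apply Finset.sum_eq_zero
    intro q _
    rw [if_neg]
    intro e; exact h (e ▸ Ix_le q)

lemma sumCollapse' {n : ℕ} (m : ℕ) (f : Ix n → ℂ) :
    ∑ q : Ix n, (if q.1 = m then f q else 0)
      = if h : m ≤ n then f ⟨m, mem_Ix h⟩ else 0 := by
  rw [← sumCollapse m f]
  refine Finset.sum_congr rfl fun q _ => ?_
  by_cases h : m = q.1
  · rw [if_pos h, if_pos h.symm]
  · rw [if_neg h, if_neg fun e => h e.symm]

lemma mulA_single {n : ℕ} (i j : Ix n) :
    mulA n (Pi.single i 1) (Pi.single j 1)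
      = fun p => if i.1 + j.1 + 1 = p.1 then ((j.1 : ℂ) + 1)⁻¹ else 0 := by
  funext p
  unfold mulA
  rw [Finset.sum_eq_single i]
  · rw [Finset.sum_eq_single j]
    · simp
    · intro b _ hb; simp [Pi.single_apply, hb]
    · intro habs; exact absurd (Finset.mem_univ _) habs
  · intro b _ hb
    apply Finset.sum_eq_zero
    intro q _
    simp [Pi.single_apply, hb]
  · intro habs; exact absurd (Finset.mem_univ _) habs

lemma mulA_single_right {n : ℕ} (v : V n) (k : Ix n) :
    mulA n v (Pi.single k 1)
      = fun p => ∑ s : Ix n, v s * (if s.1 + k.1 + 1 = p.1 then ((k.1 : ℂ) + 1)⁻¹ else 0) := by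
  funext p
  unfold mulA
  refine Finset.sum_congr rfl fun s _ => ?_
  rw [Finset.sum_eq_single k]
  · simp
  · intro b _ hb; simp [Pi.single_apply, hb]
  · intro habs; exact absurd (Finset.mem_univ _) habs

lemma mulA_single_left {n : ℕ} (j : Ix n) (w : V n) :
    mulA n (Pi.single j 1) w
      = fun p => ∑ t : Ix n, w t * (if j.1 + t.1 + 1 = p.1 then ((t.1 : ℂ) + 1)⁻¹ else 0) := by
  funext p
  unfold mulA
  rw [Finset.sum_eq_single j]
  · refine Finset.sum_congr rfl fun t _ => by simp
  · intro b _ hb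
    apply Finset.sum_eq_zero
    intro q _
    simp [Pi.single_apply, hb]
  · intro habs; exact absurd (Finset.mem_univ _) habs

noncomputable def mulB (n : ℕ) : V n →ₗ[ℂ] V n →ₗ[ℂ] V n :=
  LinearMap.mk₂ ℂ (mulA n)
    (fun x x' y => by
      funext p
      simp only [mulA, Pi.add_apply, ← Finset.sum_add_distrib]
      exact Finset.sum_congr rfl fun a _ => Finset.sum_congr rfl fun b _ => by ring)
    (fun c x y => by
      funext p
      simp only [mulA, Pi.smul_apply, smul_eq_mul, Finset.mul_sum]
      exact Finset.sum_congr rfl fun a _ => Finset.sum_congr rfl fun b _ => by ring)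
    (fun x y y' => by
      funext p
      simp only [mulA, Pi.add_apply, ← Finset.sum_add_distrib]
      exact Finset.sum_congr rfl fun a _ => Finset.sum_congr rfl fun b _ => by ring)
    (fun c x y => by
      funext p
      simp only [mulA, Pi.smul_apply, smul_eq_mul, Finset.mul_sum]
      exact Finset.sum_congr rfl fun a _ => Finset.sum_congr rfl fun b _ => by ring)

lemma mulA_eq_mulB {n : ℕ} (x y : V n) : mulA n x y = mulB n x y := rfl

lemma phiD_single {n : ℕ} (i : ℕ) (k : Ix n) :
    phiD n i (Pi.single k 1)
      = fun p => if p.1 = k.1 + i then ((i : ℂ) + 1 + (k.1 : ℂ)) else 0 := by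
  funext p
  simp only [phiD, Matrix.mulVecLin_apply, Matrix.mulVec, dotProduct]
  show ∑ s : Ix n, (if p.1 = s.1 + i then ((i : ℂ) + 1 + (s.1 : ℂ)) else 0) * (Pi.single k 1 : V n) s = _
  rw [Finset.sum_eq_single k]
  · simp
  · intro b _ hb; simp [Pi.single_apply, hb]
  · intro habs; exact absurd (Finset.mem_univ _) habs

lemma basis_expand {n : ℕ} (x : V n) : x = ∑ i : Ix n, x i • (Pi.single i 1 : V n) := by
  funext p
  rw [Finset.sum_apply]
  rw [Finset.sum_eq_single p]
  · simp
  · intro b _ hb; simp [Pi.single_apply, hb.symm]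
  · intro habs; exact absurd (Finset.mem_univ _) habs

lemma isDer_of_basis {n : ℕ} (D : V n →ₗ[ℂ] V n)
    (h : ∀ i j : Ix n, D (mulA n (Pi.single i 1) (Pi.single j 1))
        = mulA n (D (Pi.single i 1)) (Pi.single j 1)
          + mulA n (Pi.single i 1) (D (Pi.single j 1))) :
    IsDer n D := by
  have h' : ∀ i j : Ix n, D (mulB n (Pi.single i 1) (Pi.single j 1))
      = mulB n (D (Pi.single i 1)) (Pi.single j 1)
        + mulB n (Pi.single i 1) (D (Pi.single j 1)) := by
    simpa only [mulA_eq_mulB] using h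
  intro x y
  rw [mulA_eq_mulB, mulA_eq_mulB, mulA_eq_mulB]
  conv_lhs => rw [basis_expand x, basis_expand y]
  conv_rhs => rw [basis_expand x, basis_expand y]
  simp only [map_sum, map_smul, LinearMap.sum_apply, LinearMap.smul_apply, h', smul_add,
    Finset.sum_add_distrib]

lemma phiD_apply {n : ℕ} (i : ℕ) (v : V n) (p : Ix n) :
    phiD n i v p = ∑ s : Ix n, (if p.1 = s.1 + i then ((i : ℂ) + 1 + (s.1 : ℂ)) else 0) * v s :=
  rfl

lemma isDer_phiD {n : ℕ} (i : ℕ) : IsDer n (phiD n i) := by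
  apply isDer_of_basis
  intro j k
  funext p
  rw [Pi.add_apply]
  have hL : (phiD n i) (mulA n (Pi.single j 1) (Pi.single k 1)) p
      = if h : j.1 + k.1 + 1 ≤ n then
          (if p.1 = (j.1 + k.1 + 1) + i then ((i : ℂ) + 1 + ((j.1 + k.1 + 1 : ℕ) : ℂ)) else 0)
            * ((k.1 : ℂ) + 1)⁻¹
        else 0 := by
    rw [mulA_single, phiD_apply]
    have e1 : ∀ s : Ix n,
        (if p.1 = s.1 + i then ((i : ℂ) + 1 + (s.1 : ℂ)) else 0)
          * (if j.1 + k.1 + 1 = s.1 then ((k.1 : ℂ) + 1)⁻¹ else 0)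
        = if j.1 + k.1 + 1 = s.1 then
            (if p.1 = s.1 + i then ((i : ℂ) + 1 + (s.1 : ℂ)) else 0) * ((k.1 : ℂ) + 1)⁻¹
          else 0 := fun s => by split_ifs <;> simp
    rw [Finset.sum_congr rfl fun s _ => e1 s,
      sumCollapse (j.1 + k.1 + 1)
        (fun s => (if p.1 = s.1 + i then ((i : ℂ) + 1 + (s.1 : ℂ)) else 0) * ((k.1 : ℂ) + 1)⁻¹)]
  have hR1 : mulA n (phiD n i (Pi.single j 1)) (Pi.single k 1) p
      = if h : j.1 + i ≤ n then
          ((i : ℂ) + 1 + (j.1 : ℂ)) * (if (j.1 + i) + k.1 + 1 = p.1 then ((k.1 : ℂ) + 1)⁻¹ else 0)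
        else 0 := by
    rw [phiD_single, mulA_single_right]
    dsimp only
    have e1 : ∀ s : Ix n,
        (if s.1 = j.1 + i then ((i : ℂ) + 1 + (j.1 : ℂ)) else 0)
          * (if s.1 + k.1 + 1 = p.1 then ((k.1 : ℂ) + 1)⁻¹ else 0)
        = if s.1 = j.1 + i then
            ((i : ℂ) + 1 + (j.1 : ℂ)) * (if s.1 + k.1 + 1 = p.1 then ((k.1 : ℂ) + 1)⁻¹ else 0)
          else 0 := fun s => by split_ifs <;> simp
    rw [Finset.sum_congr rfl fun s _ => e1 s,
      sumCollapse' (j.1 + i)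
        (fun s => ((i : ℂ) + 1 + (j.1 : ℂ)) * (if s.1 + k.1 + 1 = p.1 then ((k.1 : ℂ) + 1)⁻¹ else 0))]
  have hR2 : mulA n (Pi.single j 1) (phiD n i (Pi.single k 1)) p
      = if h : k.1 + i ≤ n then
          ((i : ℂ) + 1 + (k.1 : ℂ))
            * (if j.1 + (k.1 + i) + 1 = p.1 then (((k.1 + i : ℕ) : ℂ) + 1)⁻¹ else 0)
        else 0 := by
    rw [phiD_single, mulA_single_left]
    dsimp only
    have e1 : ∀ t : Ix n,
        (if t.1 = k.1 + i then ((i : ℂ) + 1 + (k.1 : ℂ)) else 0)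
          * (if j.1 + t.1 + 1 = p.1 then ((t.1 : ℂ) + 1)⁻¹ else 0)
        = if t.1 = k.1 + i then
            ((i : ℂ) + 1 + (k.1 : ℂ)) * (if j.1 + t.1 + 1 = p.1 then ((t.1 : ℂ) + 1)⁻¹ else 0)
          else 0 := fun t => by split_ifs <;> simp
    rw [Finset.sum_congr rfl fun t _ => e1 t,
      sumCollapse' (k.1 + i)
        (fun t => ((i : ℂ) + 1 + (k.1 : ℂ)) * (if j.1 + t.1 + 1 = p.1 then ((t.1 : ℂ) + 1)⁻¹ else 0))]
  rw [hL, hR1, hR2]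
  have hp := Ix_le p
  have hc1 : ((k.1 : ℂ) + 1) ≠ 0 := Nat.cast_add_one_ne_zero k.1
  have hc2 : (((k.1 + i : ℕ)) : ℂ) + 1 ≠ 0 := Nat.cast_add_one_ne_zero _
  split_ifs
  all_goals try (exfalso; omega)
  all_goals try simp
  all_goals push_cast at hc2 ⊢
  all_goals field_simp
  all_goals ring

lemma mulA_zero_left {n : ℕ} (y : V n) : mulA n 0 y = 0 := by
  funext p; simp [mulA]

lemma mulA_zero_right {n : ℕ} (x : V n) : mulA n x 0 = 0 := by
  funext p; simp [mulA]

noncomputable def derSub (n : ℕ) : Submodule ℂ (V n →ₗ[ℂ] V n) where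
  carrier := {D | IsDer n D}
  add_mem' := by
    intro a b ha hb
    have ha' : IsDer n a := ha
    have hb' : IsDer n b := hb
    intro x y
    simp only [LinearMap.add_apply]
    rw [ha' x y, hb' x y]
    simp only [mulA_eq_mulB, map_add, LinearMap.add_apply]
    abel
  zero_mem' := by
    intro x y
    simp [mulA_eq_mulB]
  smul_mem' := by
    intro c a ha
    have ha' : IsDer n a := ha
    intro x y
    simp only [LinearMap.smul_apply]
    rw [ha' x y]
    simp only [mulA_eq_mulB, map_smul, LinearMap.smul_apply, smul_add]

lemma der_zero_of_col0 {n : ℕ} (E : V n →ₗ[ℂ] V n) (hE : IsDer n E)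
    (h0 : E (Pi.single (⟨0, mem_Ix (Nat.zero_le n)⟩ : Ix n) 1) = 0) : E = 0 := by
  have key : ∀ m : ℕ, ∀ hm : m ≤ n, E (Pi.single (⟨m, mem_Ix hm⟩ : Ix n) 1) = 0 := by
    intro m
    induction m with
    | zero => intro hm; exact h0
    | succ m ih =>
      intro hm
      have hm' : m ≤ n := le_trans (Nat.le_succ m) hm
      have heq := hE (Pi.single (⟨0, mem_Ix (Nat.zero_le n)⟩ : Ix n) 1)
        (Pi.single (⟨m, mem_Ix hm'⟩ : Ix n) 1)
      have hmul : mulA n (Pi.single (⟨0, mem_Ix (Nat.zero_le n)⟩ : Ix n) 1)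
          (Pi.single (⟨m, mem_Ix hm'⟩ : Ix n) 1)
          = ((m : ℂ) + 1)⁻¹ • (Pi.single (⟨m + 1, mem_Ix hm⟩ : Ix n) 1 : V n) := by
        rw [mulA_single]
        funext p
        by_cases h : p.1 = m + 1
        · rw [if_pos (by simpa using h.symm), Pi.smul_apply,
            Pi.single_apply, if_pos (Subtype.ext h), smul_eq_mul, mul_one]
        · rw [if_neg (by simpa using fun e => h e.symm), Pi.smul_apply,
            Pi.single_apply, if_neg (fun e => h (congrArg Subtype.val e)), smul_eq_mul, mul_zero]
      rw [hmul, map_smul, h0, ih hm', mulA_zero_left, mulA_zero_right, add_zero] at heq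
      have hne : ((m : ℂ) + 1)⁻¹ ≠ 0 := inv_ne_zero (Nat.cast_add_one_ne_zero m)
      rcases smul_eq_zero.mp heq with h | h
      · exact absurd h hne
      · exact h
  apply LinearMap.ext
  intro x
  conv_lhs => rw [basis_expand x]
  rw [map_sum]
  rw [LinearMap.zero_apply]
  apply Finset.sum_eq_zero
  intro q _
  rw [map_smul, key q.1 (Ix_le q), smul_zero]

theorem stmt10 (n : ℕ) (hn : 1 ≤ n) :
    {D : V n →ₗ[ℂ] V n | IsDer n D}
      = (Submodule.span ℂ {D | ∃ i ≤ n, D = phiD n i} : Submodule ℂ (V n →ₗ[ℂ] V n)) := by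
  ext D
  simp only [Set.mem_setOf_eq, SetLike.mem_coe]
  constructor
  · intro hD
    set e0 : Ix n := ⟨0, mem_Ix (Nat.zero_le n)⟩ with he0
    set lam : Ix n → ℂ := fun q => D (Pi.single e0 1) q / ((q.1 : ℂ) + 1) with hlam
    set D' : V n →ₗ[ℂ] V n := ∑ q : Ix n, lam q • phiD n q.1 with hD'def
    have hmem : D' ∈ Submodule.span ℂ {D : V n →ₗ[ℂ] V n | ∃ i ≤ n, D = phiD n i} := by
      apply Submodule.sum_mem
      intro q _
      exact Submodule.smul_mem _ _ (Submodule.subset_span ⟨q.1, Ix_le q, rfl⟩)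
    have hD'der : D' ∈ derSub n := by
      apply Submodule.sum_mem
      intro q _
      exact Submodule.smul_mem _ _ (isDer_phiD q.1)
    have hEder : IsDer n (D - D') := Submodule.sub_mem (derSub n) hD hD'der
    have hcol0 : (D - D') (Pi.single e0 1) = 0 := by
      rw [LinearMap.sub_apply, sub_eq_zero]
      funext p
      rw [hD'def, LinearMap.sum_apply, Finset.sum_apply]
      have hterm : ∀ q : Ix n, ((lam q • phiD n q.1) (Pi.single e0 1)) p
          = if p.1 = q.1 then lam q * ((q.1 : ℂ) + 1) else 0 := by
        intro q
        rw [LinearMap.smul_apply, Pi.smul_apply, phiD_single]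
        dsimp only
        rw [smul_eq_mul, mul_ite, mul_zero]
        have h0 : (e0.1 : ℕ) = 0 := rfl
        try rw [h0]
        norm_num
      rw [Finset.sum_congr rfl fun q _ => hterm q, sumCollapse p.1
        (fun q => lam q * ((q.1 : ℂ) + 1)), dif_pos (Ix_le p)]
      have hpe : (⟨p.1, mem_Ix (Ix_le p)⟩ : Ix n) = p := Subtype.ext rfl
      rw [hpe, hlam]
      have hne : ((p.1 : ℂ) + 1) ≠ 0 := Nat.cast_add_one_ne_zero p.1
      field_simp
    have : D - D' = 0 := der_zero_of_col0 _ hEder hcol0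
    have hDD' : D = D' := by
      have := sub_eq_zero.mp this
      exact this
    rw [hDD']
    exact hmem
  · intro hD
    have hle : Submodule.span ℂ {D : V n →ₗ[ℂ] V n | ∃ i ≤ n, D = phiD n i} ≤ derSub n := by
      apply Submodule.span_le.mpr
      rintro f ⟨i, hi, rfl⟩
      exact isDer_phiD i
    exact hle hD
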